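/- Let S ⊆ ℤ^r be finite and nonempty, a_s ∈ K[n]\{0} for s ∈ S, and f ∈ K[n]; let a'_s denote the aperiodic part of a_s. Fix i ∈ {1,…,r}. Define k := max{ |s_i − t_i| : s = (s_1,…,s_r), t = (t_1,…,t_r) ∈ S }, A := { s ∈ S : there exists t ∈ S with t_i − s_i = k }, B := { s ∈ S : there exists t ∈ S with s_i − t_i = k }, and s_i := max{ Disp_i(a'_s, N_i^{−k} a'_t) : s ∈ A, t ∈ B }. Then for any solution y = p/(u·q) ∈ K(n) of the PLDE ∑_{s∈S} a_s N^s y = f, written in lowest terms with u the periodic part and q the aperiodic part of the denominator, we have Disp_i(q, q) ≤ s_i. -/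

import Mathlib

open MvPolynomial

/-- The substitution homomorphism `n_j ↦ n_j + i_j` on `K[n₁,…,n_r]`. -/
noncomputable def mShiftHom (K : Type*) [Field K] {r : ℕ} (i : Fin r → ℤ) :
    MvPolynomial (Fin r) K →ₐ[K] MvPolynomial (Fin r) K :=
  aeval (fun j => X j + C (i j : K))

/-- The shift automorphism `N^i` of `K[n₁,…,n_r]`, determined by `n_j ↦ n_j + i_j`. -/
noncomputable def mShift (K : Type*) [Field K] {r : ℕ} (i : Fin r → ℤ) :
    MvPolynomial (Fin r) K ≃ₐ[K] MvPolynomial (Fin r) K :=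
  AlgEquiv.ofAlgHom (mShiftHom K i) (mShiftHom K (-i))
    (by apply MvPolynomial.algHom_ext; intro j; simp [mShiftHom])
    (by apply MvPolynomial.algHom_ext; intro j; simp [mShiftHom])

/-- `Spread(p,q) = { i ∈ ℤ^r : gcd(p, N^i q) ≠ 1 }`, where `gcd ≠ 1` (not a unit)
is expressed as `¬ IsRelPrime`. -/
def mSpread {K : Type*} [Field K] {r : ℕ} (p q : MvPolynomial (Fin r) K) :
    Set (Fin r → ℤ) :=
  {i | ¬ IsRelPrime p (mShift K i q)}

/-- `Disp_k(p,q) = max { |i_k| : i ∈ Spread(p,q) }`, with values in `ℕ ∪ {-∞, ∞}`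
(`max ∅ = ⊥ = -∞`, unbounded sets give `∞`). -/
noncomputable def mDispAt {K : Type*} [Field K] {r : ℕ} (k : Fin r)
    (p q : MvPolynomial (Fin r) K) : WithBot ℕ∞ :=
  ⨆ i ∈ mSpread p q, (((i k).natAbs : ℕ∞) : WithBot ℕ∞)

/-- The canonical embedding of `K[n₁,…,n_r]` into its fraction field `K(n₁,…,n_r)`. -/
noncomputable def toFrac (K : Type*) [Field K] {r : ℕ} :
    MvPolynomial (Fin r) K →+* FractionRing (MvPolynomial (Fin r) K) :=
  algebraMap _ _

/-- The shift automorphism `N^i` extended to the fraction field `K(n₁,…,n_r)`. -/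
noncomputable def fShift (K : Type*) [Field K] {r : ℕ} (i : Fin r → ℤ) :
    FractionRing (MvPolynomial (Fin r) K) ≃+* FractionRing (MvPolynomial (Fin r) K) :=
  IsFractionRing.ringEquivOfRingEquiv (mShift K i).toRingEquiv

section Aux

variable {K : Type*} [Field K] {r : ℕ}

lemma mShiftHom_comp (i j : Fin r → ℤ) :
    (mShiftHom K i).comp (mShiftHom K j) = mShiftHom K (i + j) := by
  apply MvPolynomial.algHom_ext; intro l
  simp [mShiftHom, add_assoc]

lemma mShift_mShift (i j : Fin r → ℤ) (p : MvPolynomial (Fin r) K) :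
    mShift K i (mShift K j p) = mShift K (i + j) p := by
  have := congrArg (fun (F : MvPolynomial (Fin r) K →ₐ[K] MvPolynomial (Fin r) K) => F p)
    (mShiftHom_comp (K := K) i j)
  exact this

lemma mShift_zero (p : MvPolynomial (Fin r) K) : mShift K 0 p = p := by
  have : mShiftHom K (0 : Fin r → ℤ) = AlgHom.id K _ := by
    apply MvPolynomial.algHom_ext; intro l; simp [mShiftHom]
  show mShiftHom K 0 p = p
  rw [this]; rfl

lemma mShift_dvd {i : Fin r → ℤ} {p q : MvPolynomial (Fin r) K} (h : p ∣ q) :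
    mShift K i p ∣ mShift K i q := map_dvd (mShift K i).toRingEquiv.toRingHom h

lemma mShift_irreducible {i : Fin r → ℤ} {p : MvPolynomial (Fin r) K} (h : Irreducible p) :
    Irreducible (mShift K i p) := h.map (mShift K i).toRingEquiv.toMulEquiv

lemma mShift_isUnit_iff {i : Fin r → ℤ} {p : MvPolynomial (Fin r) K} :
    IsUnit (mShift K i p) ↔ IsUnit p := by
  constructor
  · intro h
    have := h.map (mShift K (-i))
    rwa [mShift_mShift, neg_add_cancel, mShift_zero] at this
  · intro h; exact h.map (mShift K i)

lemma mShift_ne_zero {i : Fin r → ℤ} {p : MvPolynomial (Fin r) K} (h : p ≠ 0) :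
    mShift K i p ≠ 0 := by
  simpa using (map_ne_zero_iff _ (mShift K i).injective).mpr h

lemma isRelPrime_mShift_iff {i : Fin r → ℤ} {p q : MvPolynomial (Fin r) K} :
    IsRelPrime (mShift K i p) (mShift K i q) ↔ IsRelPrime p q := by
  constructor
  · intro h d hdp hdq
    have := h (mShift_dvd (i := i) hdp) (mShift_dvd (i := i) hdq)
    exact mShift_isUnit_iff.mp this
  · intro h d hdp hdq
    have h1 : mShift K (-i) d ∣ p := by
      have := mShift_dvd (i := -i) hdp
      rwa [mShift_mShift, neg_add_cancel, mShift_zero] at this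
    have h2 : mShift K (-i) d ∣ q := by
      have := mShift_dvd (i := -i) hdq
      rwa [mShift_mShift, neg_add_cancel, mShift_zero] at this
    have := h h1 h2
    exact mShift_isUnit_iff.mp this

lemma mSpread_mShift (c : Fin r → ℤ) (p q : MvPolynomial (Fin r) K) :
    mSpread (mShift K c p) (mShift K c q) = mSpread p q := by
  ext i
  simp only [mSpread, Set.mem_setOf_eq, not_iff_not]
  rw [mShift_mShift, show i + c = c + i from add_comm _ _, ← mShift_mShift]
  exact isRelPrime_mShift_iff

lemma mShift_associated {i : Fin r → ℤ} {p q : MvPolynomial (Fin r) K} (h : Associated p q) :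
    Associated (mShift K i p) (mShift K i q) :=
  h.map (mShift K i).toRingEquiv.toRingHom.toMonoidHom

/-- If `v` is a non-unit associated to a nontrivial shift of itself, its spread is infinite. -/
lemma spread_infinite_of_assoc_shift {v : MvPolynomial (Fin r) K} (hv : ¬ IsUnit v)
    {δ : Fin r → ℤ} (hδ : δ ≠ 0) (h : Associated v (mShift K δ v)) :
    (mSpread v v).Infinite := by
  have key : ∀ m : ℤ, Associated v (mShift K (m • δ) v) := by
    intro m
    induction m using Int.induction_on with
    | zero => simpa [mShift_zero] using Associated.refl v
    | succ n ih =>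
        have h2 := mShift_associated (i := δ) ih
        rw [mShift_mShift] at h2
        have h3 : Associated v (mShift K (δ + (n : ℤ) • δ) v) := h.trans h2
        have harith : ((n : ℤ) + 1) • δ = δ + (n : ℤ) • δ := by
          rw [add_smul, one_smul, add_comm]
        rwa [harith]
    | pred n ih =>
        have hneg : Associated (mShift K (-δ) v) v := by
          have := mShift_associated (i := -δ) h
          rw [mShift_mShift, neg_add_cancel, mShift_zero] at this
          exact this
        have h2 := mShift_associated (i := -δ) ih
        rw [mShift_mShift] at h2
        have h3 : Associated v (mShift K (-δ + (-(n : ℤ)) • δ) v) :=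
          (hneg.symm).trans h2
        have harith : (-(n : ℤ) - 1) • δ = -δ + (-(n : ℤ)) • δ := by
          rw [sub_smul, one_smul, sub_eq_neg_add]
        rwa [harith]
  apply Set.infinite_of_injective_forall_mem (f := fun m : ℤ => m • δ)
  · exact smul_left_injective ℤ hδ
  · intro m
    simp only [mSpread, Set.mem_setOf_eq]
    intro hrp
    exact hv (hrp dvd_rfl (key m).dvd)

/-- The set of shifts `j` with `N^j v ∣ q` is finite when all irreducible divisors of `q`
are aperiodic. -/
lemma finite_shiftSet {q v : MvPolynomial (Fin r) K} (hq0 : q ≠ 0)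
    (hq : ∀ d, Irreducible d → d ∣ q → (mSpread d d).Finite)
    (hv : Irreducible v) :
    {j : Fin r → ℤ | mShift K j v ∣ q}.Finite := by
  classical
  set F : (Fin r → ℤ) → MvPolynomial (Fin r) K := fun j =>
    if h : mShift K j v ∣ q then
      (UniqueFactorizationMonoid.exists_mem_factors_of_dvd hq0 (mShift_irreducible hv) h).choose
    else 0 with hF
  apply Set.Finite.of_finite_image (f := F)
  · apply Set.Finite.subset (Set.Finite.image (fun x => x)
      (UniqueFactorizationMonoid.factors q).toFinset.finite_toSet)
    rintro x ⟨j, hj, rfl⟩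
    simp only [Set.mem_setOf_eq] at hj
    have hspec := (UniqueFactorizationMonoid.exists_mem_factors_of_dvd hq0
      (mShift_irreducible hv) hj).choose_spec
    simp only [hF, dif_pos hj]
    exact ⟨_, Multiset.mem_toFinset.mpr hspec.1, rfl⟩
  · intro j1 h1 j2 h2 heq
    simp only [Set.mem_setOf_eq] at h1 h2
    by_contra hne
    have hs1 := (UniqueFactorizationMonoid.exists_mem_factors_of_dvd hq0
      (mShift_irreducible hv) h1).choose_spec
    have hs2 := (UniqueFactorizationMonoid.exists_mem_factors_of_dvd hq0
      (mShift_irreducible hv) h2).choose_spec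
    rw [hF] at heq
    simp only [dif_pos h1, dif_pos h2] at heq
    have hassoc : Associated (mShift K j1 v) (mShift K j2 v) :=
      hs1.2.trans (by rw [heq]; exact hs2.2.symm)
    have hassoc' : Associated v (mShift K (-j1 + j2) v) := by
      have := mShift_associated (i := -j1) hassoc
      rwa [mShift_mShift, mShift_mShift, neg_add_cancel, mShift_zero] at this
    have hδ : -j1 + j2 ≠ 0 := fun h => hne (by
      have : j1 = j2 := by
        have := congrArg (fun x => j1 + x) h
        simpa [add_assoc] using this.symm
      exact this)
    have hinf := spread_infinite_of_assoc_shift hv.not_isUnit hδ hassoc'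
    have hfin := hq _ (mShift_irreducible (i := j1) hv) h1
    rw [mSpread_mShift] at hfin
    exact hinf hfin

/-- The lexicographic linear ordered group structure used to pick extremal shifts. -/
noncomputable instance lexPiLOACG (r : ℕ) : IsOrderedAddMonoid (Lex (Fin r → ℤ)) :=
  letI : WellFoundedLT (Fin r) := inferInstance
  inferInstance

/-- **Core extremal lemma.**  Given the cleared (polynomial) form of the equation and an
irreducible `v ∣ q`, there are a `φ`-maximal `tm ∈ S` and a `φ`-maximal shift `jm` with
`N^jm v ∣ q` such that `N^(tm+jm) v` divides the aperiodic part `a' tm`. -/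
lemma core_extremal {K : Type*} [Field K] {r : ℕ}
    {Γ : Type*} [AddCommGroup Γ] [LinearOrder Γ] [IsOrderedAddMonoid Γ]
    (φ : (Fin r → ℤ) → Γ) (hφadd : ∀ x y, φ (x + y) = φ x + φ y)
    (hφinj : Function.Injective φ)
    (S : Finset (Fin r → ℤ)) (hS : S.Nonempty)
    (a au a' : (Fin r → ℤ) → MvPolynomial (Fin r) K)
    (f pnum u q : MvPolynomial (Fin r) K)
    (hpart : ∀ s ∈ S, a s = au s * a' s ∧
      (∀ d, Irreducible d → d ∣ au s → (mSpread d d).Infinite) ∧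
      (∀ d, Irreducible d → d ∣ a' s → (mSpread d d).Finite))
    (hq0 : q ≠ 0)
    (hlow : IsRelPrime pnum (u * q))
    (hu : ∀ d, Irreducible d → d ∣ u → (mSpread d d).Infinite)
    (hq : ∀ d, Irreducible d → d ∣ q → (mSpread d d).Finite)
    (E : ∑ s ∈ S, a s * mShift K s pnum * ∏ t ∈ S.erase s, mShift K t (u * q)
        = f * ∏ t ∈ S, mShift K t (u * q))
    (v : MvPolynomial (Fin r) K) (hv : Irreducible v) (hvq : v ∣ q) :
    ∃ tm ∈ S, ∃ jm : Fin r → ℤ, mShift K jm v ∣ q ∧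
      (∀ t ∈ S, φ t ≤ φ tm) ∧ (∀ j, mShift K j v ∣ q → φ j ≤ φ jm) ∧
      mShift K (tm + jm) v ∣ a' tm := by
  classical
  have hOfin : {j : Fin r → ℤ | mShift K j v ∣ q}.Finite := finite_shiftSet hq0 hq hv
  have hO0 : (0 : Fin r → ℤ) ∈ hOfin.toFinset := by
    rw [Set.Finite.mem_toFinset]
    simpa [mShift_zero] using hvq
  obtain ⟨jm, hjmO, hjmax⟩ := Finset.exists_max_image hOfin.toFinset φ ⟨0, hO0⟩
  rw [Set.Finite.mem_toFinset] at hjmO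
  have hjmax' : ∀ j, mShift K j v ∣ q → φ j ≤ φ jm := fun j hj =>
    hjmax j (hOfin.mem_toFinset.mpr hj)
  obtain ⟨tm, htmS, htmax⟩ := Finset.exists_max_image S φ hS
  set w : MvPolynomial (Fin r) K := mShift K (tm + jm) v with hw
  have hw_irr : Irreducible w := mShift_irreducible hv
  have hw_prime : Prime w := UniqueFactorizationMonoid.irreducible_iff_prime.mp hw_irr
  have hvvfin : (mSpread v v).Finite := by
    have := hq (mShift K jm v) (mShift_irreducible hv) hjmO
    rwa [mSpread_mShift] at this
  -- w divides the tm-shifted denominator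
  have hwq : w ∣ mShift K tm q := by
    have := mShift_dvd (i := tm) hjmO
    rwa [mShift_mShift] at this
  have hwuq : w ∣ mShift K tm (u * q) := by
    rw [map_mul]; exact hwq.mul_left _
  -- w divides the RHS
  have hwRHS : w ∣ f * ∏ t ∈ S, mShift K t (u * q) := by
    have hwprod : w ∣ ∏ t ∈ S, mShift K t (u * q) :=
      hwuq.trans (Finset.dvd_prod_of_mem (fun t => mShift K t (u * q)) htmS)
    exact hwprod.mul_left f
  -- w divides each summand with s ≠ tm
  have hterm : ∀ s ∈ S.erase tm,
      w ∣ a s * mShift K s pnum * ∏ t ∈ S.erase s, mShift K t (u * q) := by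
    intro s hs
    have hne : tm ≠ s := (Finset.ne_of_mem_erase hs).symm
    have htm' : tm ∈ S.erase s := Finset.mem_erase.mpr ⟨hne, htmS⟩
    have hwprod : w ∣ ∏ t ∈ S.erase s, mShift K t (u * q) :=
      hwuq.trans (Finset.dvd_prod_of_mem (fun t => mShift K t (u * q)) htm')
    exact hwprod.mul_left _
  -- hence w divides the tm summand
  have hwT : w ∣ a tm * mShift K tm pnum * ∏ t ∈ S.erase tm, mShift K t (u * q) := by
    have hsum := Finset.sum_erase_add S
      (fun s => a s * mShift K s pnum * ∏ t ∈ S.erase s, mShift K t (u * q)) htmS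
    have heq : a tm * mShift K tm pnum * ∏ t ∈ S.erase tm, mShift K t (u * q)
        = f * ∏ t ∈ S, mShift K t (u * q)
          - ∑ s ∈ S.erase tm, (a s * mShift K s pnum * ∏ t ∈ S.erase s, mShift K t (u * q)) := by
      rw [← E, ← hsum]; ring
    rw [heq]
    exact dvd_sub hwRHS (Finset.dvd_sum hterm)
  rcases hw_prime.dvd_mul.mp hwT with h1 | h2
  · rcases hw_prime.dvd_mul.mp h1 with h3 | h4
    · -- w ∣ a tm
      obtain ⟨heq, hau, -⟩ := hpart tm htmS
      rw [heq] at h3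
      rcases hw_prime.dvd_mul.mp h3 with h5 | h6
      · exfalso
        have hinf := hau w hw_irr h5
        have hfin : (mSpread w w).Finite := by
          rw [hw, mSpread_mShift]; exact hvvfin
        exact hinf hfin
      · exact ⟨tm, htmS, jm, hjmO, htmax, hjmax', h6⟩
    · -- w ∣ N^tm pnum : contradiction with lowest terms
      exfalso
      have hdp : mShift K jm v ∣ pnum := by
        have := mShift_dvd (i := -tm) h4
        rw [mShift_mShift, mShift_mShift, neg_add_cancel, mShift_zero] at this
        rwa [show -tm + (tm + jm) = jm by abel] at this
      have hduq : mShift K jm v ∣ u * q := hjmO.mul_left u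
      exact (mShift_irreducible hv).not_isUnit (hlow hdp hduq)
  · -- w divides the product over S.erase tm
    exfalso
    obtain ⟨t, ht, hwt⟩ := hw_prime.exists_mem_finset_dvd h2
    rw [map_mul] at hwt
    rcases hw_prime.dvd_mul.mp hwt with h8 | h9
    · -- w ∣ N^t u : u is periodic, contradiction
      have hdu : mShift K (tm + jm - t) v ∣ u := by
        have := mShift_dvd (i := -t) h8
        rw [mShift_mShift, mShift_mShift, neg_add_cancel, mShift_zero] at this
        rwa [show -t + (tm + jm) = tm + jm - t by abel] at this
      have hinf := hu _ (mShift_irreducible hv) hdu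
      rw [mSpread_mShift] at hinf
      exact hinf hvvfin
    · -- w ∣ N^t q : contradicts extremality
      have hj' : mShift K (tm + jm - t) v ∣ q := by
        have := mShift_dvd (i := -t) h9
        rw [mShift_mShift, mShift_mShift, neg_add_cancel, mShift_zero] at this
        rwa [show -t + (tm + jm) = tm + jm - t by abel] at this
      have hle1 : φ (tm + jm - t) ≤ φ jm := hjmax' _ hj'
      have htS : t ∈ S := Finset.mem_of_mem_erase ht
      have hle2 : φ t ≤ φ tm := htmax t htS
      have hsum : φ t + φ (tm + jm - t) = φ tm + φ jm := by
        rw [← hφadd, ← hφadd, show t + (tm + jm - t) = tm + jm by abel]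
      have heq2 : φ t = φ tm := by
        have h1' : φ tm + φ jm ≤ φ t + φ jm := by
          calc φ tm + φ jm = φ t + φ (tm + jm - t) := hsum.symm
            _ ≤ φ t + φ jm := add_le_add_right hle1 _
        have : φ tm ≤ φ t := le_of_add_le_add_right h1'
        exact le_antisymm hle2 this
      exact (Finset.mem_erase.mp ht).1 (hφinj heq2)

set_option maxHeartbeats 1000000 in
/-- Clearing denominators: the polynomial form of the equation. -/
lemma cleared_equation {K : Type*} [Field K] {r : ℕ}
    (S : Finset (Fin r → ℤ))
    (a : (Fin r → ℤ) → MvPolynomial (Fin r) K)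
    (f pnum u q : MvPolynomial (Fin r) K)
    (hden0 : u * q ≠ 0)
    (y : FractionRing (MvPolynomial (Fin r) K))
    (hy : y = toFrac K pnum / toFrac K (u * q))
    (hsol : ∑ s ∈ S, toFrac K (a s) * fShift K s y = toFrac K f) :
    ∑ s ∈ S, a s * mShift K s pnum * ∏ t ∈ S.erase s, mShift K t (u * q)
        = f * ∏ t ∈ S, mShift K t (u * q) := by
  classical
  have hinj : Function.Injective (toFrac K (r := r)) :=
    IsFractionRing.injective (MvPolynomial (Fin r) K) (FractionRing (MvPolynomial (Fin r) K))
  have hkey : ∀ (p : MvPolynomial (Fin r) K) (i : Fin r → ℤ),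
      fShift K i (toFrac K p) = toFrac K (mShift K i p) := by
    intro p i
    exact IsFractionRing.ringEquivOfRingEquiv_algebraMap (mShift K i).toRingEquiv p
  have hQ0 : ∀ t : Fin r → ℤ, toFrac K (mShift K t (u * q)) ≠ 0 := fun t =>
    (map_ne_zero_iff _ hinj).mpr (mShift_ne_zero hden0)
  apply hinj
  calc toFrac K (∑ s ∈ S, a s * mShift K s pnum * ∏ t ∈ S.erase s, mShift K t (u * q))
      = ∑ s ∈ S, toFrac K (a s) * fShift K s y
          * toFrac K (∏ t ∈ S, mShift K t (u * q)) := by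
        rw [map_sum]
        apply Finset.sum_congr rfl
        intro s hs
        rw [map_mul, map_mul, map_prod, hy, map_div₀, hkey, hkey, map_prod,
          ← Finset.mul_prod_erase S (fun t => toFrac K (mShift K t (u * q))) hs]
        field_simp [hQ0 s]
        rw [mul_div_cancel_right₀ _ (hQ0 s)]
    _ = (∑ s ∈ S, toFrac K (a s) * fShift K s y)
          * toFrac K (∏ t ∈ S, mShift K t (u * q)) := (Finset.sum_mul _ _ _).symm
    _ = toFrac K f * toFrac K (∏ t ∈ S, mShift K t (u * q)) := by rw [hsol]
    _ = toFrac K (f * ∏ t ∈ S, mShift K t (u * q)) := (map_mul _ _ _).symm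

end Aux

/-- **Lemma (dispersion bound, one coordinate).**
Let `S ⊆ ℤ^r` be finite and nonempty, `a_s ∈ K[n]\{0}` for `s ∈ S`, `f ∈ K[n]`, and let
`a s = au s * a' s` with `au s` the periodic part and `a' s` the aperiodic part of `a s`.
Fix a coordinate `co`, put `k := max { |s_co - t_co| : s, t ∈ S }`,
`A := { s ∈ S : ∃ t ∈ S, t_co - s_co = k }`, `B := { s ∈ S : ∃ t ∈ S, s_co - t_co = k }`,
and `s_co := max { Disp_co(a' s, N_co^{-k} (a' t)) : s ∈ A, t ∈ B }`.
Then for any solution `y = pnum/(u·q) ∈ K(n)` of `∑_{s ∈ S} a_s N^s y = f`, written in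
lowest terms with `u` the periodic part and `q` the aperiodic part of the denominator,
`Disp_co(q,q) ≤ s_co`. -/
theorem dispAt_of_denominator_le
    {K : Type*} [Field K] [CharZero K] {r : ℕ}
    (S : Finset (Fin r → ℤ)) (hS : S.Nonempty)
    (a : (Fin r → ℤ) → MvPolynomial (Fin r) K) (ha : ∀ s ∈ S, a s ≠ 0)
    (f : MvPolynomial (Fin r) K)
    (au a' : (Fin r → ℤ) → MvPolynomial (Fin r) K)
    (hpart : ∀ s ∈ S, a s = au s * a' s ∧
      (∀ d, Irreducible d → d ∣ au s → (mSpread d d).Infinite) ∧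
      (∀ d, Irreducible d → d ∣ a' s → (mSpread d d).Finite))
    (co : Fin r)
    (k : ℕ) (hk : k = S.sup fun s => S.sup fun t => (s co - t co).natAbs)
    (y : FractionRing (MvPolynomial (Fin r) K))
    (hsol : ∑ s ∈ S, toFrac K (a s) * fShift K s y = toFrac K f)
    (pnum u q : MvPolynomial (Fin r) K)
    (hden0 : u * q ≠ 0)
    (hy : y = toFrac K pnum / toFrac K (u * q))
    (hlow : IsRelPrime pnum (u * q))
    (hu : ∀ d, Irreducible d → d ∣ u → (mSpread d d).Infinite)
    (hq : ∀ d, Irreducible d → d ∣ q → (mSpread d d).Finite) :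
    mDispAt co q q ≤
      ⨆ s ∈ {s : Fin r → ℤ | s ∈ S ∧ ∃ t ∈ S, t co - s co = (k : ℤ)},
      ⨆ t ∈ {t : Fin r → ℤ | t ∈ S ∧ ∃ t' ∈ S, t co - t' co = (k : ℤ)},
        mDispAt co (a' s) (mShift K (Pi.single co (-(k : ℤ))) (a' t)) := by
  classical
  have hq0 : q ≠ 0 := fun h => hden0 (by rw [h, mul_zero])
  have E := cleared_equation S a f pnum u q hden0 y hy hsol
  -- the order used for extremal choices
  set φ : (Fin r → ℤ) → ℤ ×ₗ Lex (Fin r → ℤ) := fun j => toLex (j co, toLex j) with hφ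
  have hφadd : ∀ x y, φ (x + y) = φ x + φ y := fun x y => rfl
  have hφinj : Function.Injective φ := by
    intro x y h
    have h2 := congrArg ofLex h
    have h3 := congrArg Prod.snd h2
    exact toLex.injective h3
  have hφco : ∀ x y, φ x ≤ φ y → x co ≤ y co := by
    intro x y h
    rcases Prod.Lex.le_iff.mp h with h' | h'
    · exact le_of_lt h'
    · exact le_of_eq h'.1
  have hφadd' : ∀ x y, (-φ (x + y)) = -φ x + -φ y := by
    intro x y; rw [hφadd]; abel
  have hφinj' : Function.Injective (fun j => -φ j) := by
    intro x y h
    exact hφinj (neg_injective h)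
  -- unfold the biSup on the left
  rw [mDispAt]
  refine iSup_le fun i => iSup_le fun hi => ?_
  -- extract an irreducible common factor
  rw [mSpread, Set.mem_setOf_eq, IsRelPrime] at hi
  push_neg at hi
  obtain ⟨d0, hd0q, hd0s, hd0u⟩ := hi
  have hd00 : d0 ≠ 0 := by rintro rfl; exact hq0 (zero_dvd_iff.mp hd0q)
  obtain ⟨d, hd_irr, hdd0⟩ := WfDvdMonoid.exists_irreducible_factor hd0u hd00
  have hdq : d ∣ q := hdd0.trans hd0q
  have hdsq : d ∣ mShift K i q := hdd0.trans hd0s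
  set v : MvPolynomial (Fin r) K := mShift K (-i) d with hvdef
  have hv : Irreducible v := mShift_irreducible hd_irr
  have hvq : v ∣ q := by
    have := mShift_dvd (i := -i) hdsq
    rwa [mShift_mShift, neg_add_cancel, mShift_zero] at this
  have hvi : mShift K i v ∣ q := by
    rw [hvdef, mShift_mShift, show i + -i = (0 : Fin r → ℤ) by abel, mShift_zero]
    exact hdq
  -- apply the core lemma twice
  obtain ⟨tm, htmS, jm, hjmq, htmax, hjmax, hdvd_top⟩ :=
    core_extremal φ hφadd hφinj S hS a au a' f pnum u q hpart hq0 hlow hu hq E v hv hvq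
  obtain ⟨sm, hsmS, jn, hjnq, hsmax, hjnmax, hdvd_bot⟩ :=
    core_extremal (fun j => -φ j) hφadd' hφinj' S hS a au a' f pnum u q hpart hq0 hlow hu hq E v hv hvq
  -- coordinate facts
  have htmco : ∀ s ∈ S, s co ≤ tm co := fun s hs => hφco _ _ (htmax s hs)
  have hsmco : ∀ s ∈ S, sm co ≤ s co := fun s hs => hφco _ _ (neg_le_neg_iff.mp (hsmax s hs))
  have hjmco0 : (0 : ℤ) ≤ jm co := by
    have := hjmax 0 (by simpa [mShift_zero] using hvq)
    simpa using hφco _ _ this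
  have hjmcoi : i co ≤ jm co := hφco _ _ (hjmax i hvi)
  have hjnco0 : jn co ≤ 0 := by
    have := hjnmax 0 (by simpa [mShift_zero] using hvq)
    have h2 := neg_le_neg_iff.mp this
    simpa using hφco _ _ h2
  have hjncoi : jn co ≤ i co := hφco _ _ (neg_le_neg_iff.mp (hjnmax i hvi))
  -- k = tm co - sm co
  have hkle : (k : ℤ) = tm co - sm co := by
    have hub : k ≤ (tm co - sm co).natAbs := by
      rw [hk]; clear hk
      apply Finset.sup_le
      intro s hs
      apply Finset.sup_le
      intro t ht
      have h1 := hsmco s hs; have h2 := htmco s hs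
      have h3 := hsmco t ht; have h4 := htmco t ht
      omega
    have hlb : (tm co - sm co).natAbs ≤ k := by
      rw [hk]
      calc (tm co - sm co).natAbs
          ≤ S.sup (fun t => (tm co - t co).natAbs) :=
            Finset.le_sup (f := fun t => (tm co - t co).natAbs) hsmS
        _ ≤ S.sup fun s => S.sup fun t => (s co - t co).natAbs :=
            Finset.le_sup (f := fun s => S.sup fun t => (s co - t co).natAbs) htmS
    have hkk : k = (tm co - sm co).natAbs := le_antisymm hub hlb
    have hnn : (0 : ℤ) ≤ tm co - sm co := by
      have := hsmco tm htmS; clear hk; omega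
    clear hk
    omega
  -- memberships in A and B
  have hsmA : sm ∈ {s : Fin r → ℤ | s ∈ S ∧ ∃ t ∈ S, t co - s co = (k : ℤ)} :=
    ⟨hsmS, tm, htmS, by clear hk; omega⟩
  have htmB : tm ∈ {t : Fin r → ℤ | t ∈ S ∧ ∃ t' ∈ S, t co - t' co = (k : ℤ)} :=
    ⟨htmS, sm, hsmS, by clear hk; omega⟩
  -- the witness shift
  set i' : Fin r → ℤ := sm + jn - tm - jm + Pi.single co (k : ℤ) with hi'
  set z : MvPolynomial (Fin r) K := mShift K (sm + jn) v with hz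
  have hz2 : z ∣ mShift K i' (mShift K (Pi.single co (-(k : ℤ))) (a' tm)) := by
    have hvec : i' + Pi.single co (-(k : ℤ)) + (tm + jm) = sm + jn := by
      rw [hi', Pi.single_neg]
      abel
    have := mShift_dvd (i := i' + Pi.single co (-(k : ℤ))) hdvd_top
    rw [mShift_mShift, hvec] at this
    rw [mShift_mShift]
    rwa [show i' + Pi.single co (-(k : ℤ)) = i' + Pi.single co (-(k : ℤ)) from rfl]
  have hi'spread : i' ∈ mSpread (a' sm) (mShift K (Pi.single co (-(k : ℤ))) (a' tm)) := by
    rw [mSpread, Set.mem_setOf_eq]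
    intro hrp
    exact (mShift_irreducible hv).not_isUnit (hrp hdvd_bot hz2)
  -- coordinate computation
  have hi'co : (i co).natAbs ≤ (i' co).natAbs := by
    have h1 : i' co = sm co + jn co - tm co - jm co + (k : ℤ) := by
      rw [hi']
      simp [Pi.single_apply]
    clear hk
    omega
  -- chain the inequalities
  calc (((i co).natAbs : ℕ∞) : WithBot ℕ∞)
      ≤ (((i' co).natAbs : ℕ∞) : WithBot ℕ∞) := by
        exact_mod_cast WithBot.coe_le_coe.mpr (by exact_mod_cast hi'co)
    _ ≤ mDispAt co (a' sm) (mShift K (Pi.single co (-(k : ℤ))) (a' tm)) := by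
        rw [mDispAt]
        exact le_iSup₂ (f := fun j (_ : j ∈ mSpread (a' sm)
          (mShift K (Pi.single co (-(k : ℤ))) (a' tm))) =>
          (((j co).natAbs : ℕ∞) : WithBot ℕ∞)) i' hi'spread
    _ ≤ ⨆ t ∈ {t : Fin r → ℤ | t ∈ S ∧ ∃ t' ∈ S, t co - t' co = (k : ℤ)},
          mDispAt co (a' sm) (mShift K (Pi.single co (-(k : ℤ))) (a' t)) :=
        le_iSup₂ (f := fun t (_ : t ∈ {t : Fin r → ℤ | t ∈ S ∧ ∃ t' ∈ S, t co - t' co = (k : ℤ)}) =>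
          mDispAt co (a' sm) (mShift K (Pi.single co (-(k : ℤ))) (a' t))) tm htmB
    _ ≤ _ :=
        le_iSup₂ (f := fun s (_ : s ∈ {s : Fin r → ℤ | s ∈ S ∧ ∃ t ∈ S, t co - s co = (k : ℤ)}) =>
          ⨆ t ∈ {t : Fin r → ℤ | t ∈ S ∧ ∃ t' ∈ S, t co - t' co = (k : ℤ)},
            mDispAt co (a' s) (mShift K (Pi.single co (-(k : ℤ))) (a' t))) sm hsmA
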